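/- Let Z = xA ∂/∂x + yB ∂/∂y be a holomorphic vector field on an open set U ⊇ {|x| ≤ a, |y| ≤ b} in ℂ², with Re(A) > 0 > Re(B) on U. Then for any initial point p = (x₀, y₀) with 0 < |x₀| ≤ a and |y₀| ≤ b, the forward trajectory of the real flow of Z through p meets the set {|x| = a, |y| ≤ b} at exactly one point. -/

import Mathlib

open Set Metric Complex

/-! Auxiliary lemmas for stmt_8 -/

lemma stmt8_normSq_deriv {x : ℝ → ℂ} {x' : ℂ} {s : Set ℝ} {t : ℝ}
    (h : HasDerivWithinAt x x' s t) :
    HasDerivWithinAt (fun τ => Complex.normSq (x τ))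
      (2 * ((starRingEnd ℂ) (x t) * x').re) s t := by
  have hre : HasDerivWithinAt (fun τ => (x τ).re) x'.re s t :=
    Complex.reCLM.hasFDerivAt.comp_hasDerivWithinAt t h
  have him : HasDerivWithinAt (fun τ => (x τ).im) x'.im s t :=
    Complex.imCLM.hasFDerivAt.comp_hasDerivWithinAt t h
  have h2 : HasDerivWithinAt (fun τ => (x τ).re * (x τ).re + (x τ).im * (x τ).im)
      (x'.re * (x t).re + (x t).re * x'.re + (x'.im * (x t).im + (x t).im * x'.im)) s t :=
    (hre.mul hre).add (him.mul him)
  have hfun : (fun τ => Complex.normSq (x τ))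
      = fun τ => (x τ).re * (x τ).re + (x τ).im * (x τ).im := by
    funext τ; simp [Complex.normSq_apply]
  rw [hfun]
  convert h2 using 1
  simp [Complex.mul_re, Complex.mul_im]
  ring

lemma stmt8_re_smul (z w : ℂ) (c : ℝ) :
    ((starRingEnd ℂ) z * (c • (z * w))).re = c * (Complex.normSq z * w.re) := by
  simp [Complex.normSq_apply, Complex.mul_re, Complex.mul_im, Complex.smul_re, Complex.smul_im]
  ring

lemma stmt8_re_mul (z w : ℂ) :
    ((starRingEnd ℂ) z * (z * w)).re = Complex.normSq z * w.re := by
  simpa using stmt8_re_smul z w 1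

lemma stmt8_mono {f g : ℝ → ℝ} {c d : ℝ}
    (hf : ∀ t ∈ Icc c d, HasDerivWithinAt f (g t) (Icc c d) t)
    (hg : ∀ t ∈ Icc c d, 0 ≤ g t) : MonotoneOn f (Icc c d) := by
  apply monotoneOn_of_deriv_nonneg (convex_Icc c d)
    (fun t ht => (hf t ht).continuousWithinAt)
  · intro t ht
    rw [interior_Icc] at ht
    exact ((hf t (Ioo_subset_Icc_self ht)).hasDerivAt
      (Icc_mem_nhds ht.1 ht.2)).differentiableAt.differentiableWithinAt
  · intro t ht
    rw [interior_Icc] at ht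
    rw [((hf t (Ioo_subset_Icc_self ht)).hasDerivAt (Icc_mem_nhds ht.1 ht.2)).deriv]
    exact hg t (Ioo_subset_Icc_self ht)

lemma stmt8_anti {f g : ℝ → ℝ} {c d : ℝ}
    (hf : ∀ t ∈ Icc c d, HasDerivWithinAt f (g t) (Icc c d) t)
    (hg : ∀ t ∈ Icc c d, g t ≤ 0) : AntitoneOn f (Icc c d) := by
  apply antitoneOn_of_deriv_nonpos (convex_Icc c d)
    (fun t ht => (hf t ht).continuousWithinAt)
  · intro t ht
    rw [interior_Icc] at ht
    exact ((hf t (Ioo_subset_Icc_self ht)).hasDerivAt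
      (Icc_mem_nhds ht.1 ht.2)).differentiableAt.differentiableWithinAt
  · intro t ht
    rw [interior_Icc] at ht
    rw [((hf t (Ioo_subset_Icc_self ht)).hasDerivAt (Icc_mem_nhds ht.1 ht.2)).deriv]
    exact hg t (Ioo_subset_Icc_self ht)

lemma stmt8_strictMono {f g : ℝ → ℝ} {c d : ℝ}
    (hf : ∀ t ∈ Icc c d, HasDerivWithinAt f (g t) (Icc c d) t)
    (hg : ∀ t ∈ Icc c d, 0 < g t) : StrictMonoOn f (Icc c d) := by
  apply strictMonoOn_of_deriv_pos (convex_Icc c d)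
    (fun t ht => (hf t ht).continuousWithinAt)
  intro t ht
  rw [interior_Icc] at ht
  rw [((hf t (Ioo_subset_Icc_self ht)).hasDerivAt (Icc_mem_nhds ht.1 ht.2)).deriv]
  exact hg t (Ioo_subset_Icc_self ht)

lemma stmt8_abs_eq {z : ℂ} {c : ℝ} (hc : 0 ≤ c) (h : Complex.normSq z = c^2) :
    ‖z‖ = c := by
  rw [Complex.norm_def, h, Real.sqrt_sq hc]

lemma stmt8_abs_le {z : ℂ} {c : ℝ} (hc : 0 ≤ c) (h : Complex.normSq z ≤ c^2) :
    ‖z‖ ≤ c := by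
  rw [Complex.norm_def]
  calc Real.sqrt (Complex.normSq z) ≤ Real.sqrt (c^2) := Real.sqrt_le_sqrt h
  _ = c := Real.sqrt_sq hc

lemma stmt8_normSq_le {z : ℂ} {c : ℝ} (h : ‖z‖ ≤ c) :
    Complex.normSq z ≤ c^2 := by
  rw [← Complex.sq_norm]
  exact pow_le_pow_left₀ (norm_nonneg z) h 2

lemma stmt8_slice_lip {A : ℂ × ℂ → ℂ} {V : Set (ℂ × ℂ)} (hV : IsOpen V)
    (hA : DifferentiableOn ℂ A V) {M ρ : ℝ} (hρ : 0 < ρ) (q : ℂ × ℂ)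
    (hball : closedBall q (3*ρ) ⊆ V) (hM : ∀ p ∈ closedBall q (3*ρ), ‖A p‖ ≤ M)
    {z w : ℂ × ℂ} (hz : z ∈ ball q ρ) (hw : w ∈ ball q ρ) :
    ‖A z - A w‖ ≤ (2*M/ρ) * ‖z - w‖ := by
  have hzw1 : dist z.1 q.1 < ρ := lt_of_le_of_lt (le_max_left _ _) hz
  have hzw2 : dist z.2 q.2 < ρ := lt_of_le_of_lt (le_max_right _ _) hz
  have hww1 : dist w.1 q.1 < ρ := lt_of_le_of_lt (le_max_left _ _) hw
  have hww2 : dist w.2 q.2 < ρ := lt_of_le_of_lt (le_max_right _ _) hw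
  -- generic one-variable estimate
  have key : ∀ (c : ℂ), dist c q.2 < ρ → ∀ z₁ ∈ ball q.1 ρ, ∀ w₁ ∈ ball q.1 ρ,
      ‖A (z₁, c) - A (w₁, c)‖ ≤ (M/ρ) * ‖z₁ - w₁‖ := by
    intro c hc z₁ hz₁ w₁ hw₁
    set u : ℂ → ℂ := fun ζ => A (ζ, c) with hu
    have hsub : ∀ ζ ∈ closedBall q.1 (2*ρ), (ζ, c) ∈ closedBall q (3*ρ) := by
      intro ζ hζ
      rw [mem_closedBall] at *
      rw [Prod.dist_eq]
      exact max_le (hζ.trans (by linarith)) (le_trans hc.le (by linarith))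
    have hudiff : DifferentiableOn ℂ u (ball q.1 (2*ρ)) := by
      intro ζ hζ
      exact ((hA.differentiableAt (hV.mem_nhds (hball (hsub ζ (ball_subset_closedBall hζ))))).comp ζ
        ((differentiableAt_id.prodMk (differentiableAt_const c)))).differentiableWithinAt
    have hderiv : ∀ ζ ∈ ball q.1 ρ, ‖deriv u ζ‖ ≤ M / ρ := by
      intro ζ hζ
      apply Complex.norm_deriv_le_of_forall_mem_sphere_norm_le hρ
      · constructor
        · apply hudiff.mono
          intro ξ hξ
          rw [mem_ball] at *
          calc dist ξ q.1 ≤ dist ξ ζ + dist ζ q.1 := dist_triangle _ _ _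
          _ < ρ + ρ := add_lt_add hξ hζ
          _ ≤ 2*ρ := by linarith
        · apply (hudiff.continuousOn).mono
          rw [closure_ball ζ hρ.ne']
          intro ξ hξ
          rw [mem_closedBall] at hξ
          rw [mem_ball] at hζ ⊢
          calc dist ξ q.1 ≤ dist ξ ζ + dist ζ q.1 := dist_triangle _ _ _
          _ < ρ + ρ := add_lt_add_of_le_of_lt hξ hζ
          _ ≤ 2*ρ := by linarith
      · intro ξ hξ
        apply hM
        apply hsub
        rw [mem_sphere] at hξ
        rw [mem_closedBall]
        calc dist ξ q.1 ≤ dist ξ ζ + dist ζ q.1 := dist_triangle _ _ _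
        _ ≤ ρ + ρ := add_le_add hξ.le (mem_ball.mp hζ).le
        _ ≤ 2*ρ := by linarith
    have hmvt := Convex.norm_image_sub_le_of_norm_hasFDerivWithin_le
      (f := u) (C := M/ρ) (s := ball q.1 ρ)
      (f' := fun ζ => ContinuousLinearMap.smulRight (1 : ℂ →L[ℂ] ℂ) (deriv u ζ))
      (fun ζ hζ => by
        have : DifferentiableAt ℂ u ζ :=
          hudiff.differentiableAt (isOpen_ball.mem_nhds (by
            rw [mem_ball] at hζ ⊢; linarith))
        exact (this.hasDerivAt.hasFDerivAt).hasFDerivWithinAt)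
      (fun ζ hζ => by
        rw [ContinuousLinearMap.norm_smulRight_apply, norm_one, one_mul]
        exact hderiv ζ hζ)
      (convex_ball q.1 ρ) hw₁ hz₁
    simpa [u, norm_sub_rev] using hmvt
  -- second variable
  have key2 : ∀ (c : ℂ), dist c q.1 < ρ → ∀ z₂ ∈ ball q.2 ρ, ∀ w₂ ∈ ball q.2 ρ,
      ‖A (c, z₂) - A (c, w₂)‖ ≤ (M/ρ) * ‖z₂ - w₂‖ := by
    intro c hc z₂ hz₂ w₂ hw₂
    set u : ℂ → ℂ := fun ζ => A (c, ζ) with hu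
    have hsub : ∀ ζ ∈ closedBall q.2 (2*ρ), (c, ζ) ∈ closedBall q (3*ρ) := by
      intro ζ hζ
      rw [mem_closedBall] at *
      rw [Prod.dist_eq]
      exact max_le (le_trans hc.le (by linarith)) (hζ.trans (by linarith))
    have hudiff : DifferentiableOn ℂ u (ball q.2 (2*ρ)) := by
      intro ζ hζ
      exact ((hA.differentiableAt (hV.mem_nhds (hball (hsub ζ (ball_subset_closedBall hζ))))).comp ζ
        (((differentiableAt_const c).prodMk differentiableAt_id))).differentiableWithinAt
    have hderiv : ∀ ζ ∈ ball q.2 ρ, ‖deriv u ζ‖ ≤ M / ρ := by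
      intro ζ hζ
      apply Complex.norm_deriv_le_of_forall_mem_sphere_norm_le hρ
      · constructor
        · apply hudiff.mono
          intro ξ hξ
          rw [mem_ball] at *
          calc dist ξ q.2 ≤ dist ξ ζ + dist ζ q.2 := dist_triangle _ _ _
          _ < ρ + ρ := add_lt_add hξ hζ
          _ ≤ 2*ρ := by linarith
        · apply (hudiff.continuousOn).mono
          rw [closure_ball ζ hρ.ne']
          intro ξ hξ
          rw [mem_closedBall] at hξ
          rw [mem_ball] at hζ ⊢
          calc dist ξ q.2 ≤ dist ξ ζ + dist ζ q.2 := dist_triangle _ _ _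
          _ < ρ + ρ := add_lt_add_of_le_of_lt hξ hζ
          _ ≤ 2*ρ := by linarith
      · intro ξ hξ
        apply hM
        apply hsub
        rw [mem_sphere] at hξ
        rw [mem_closedBall]
        calc dist ξ q.2 ≤ dist ξ ζ + dist ζ q.2 := dist_triangle _ _ _
        _ ≤ ρ + ρ := add_le_add hξ.le (mem_ball.mp hζ).le
        _ ≤ 2*ρ := by linarith
    have hmvt := Convex.norm_image_sub_le_of_norm_hasFDerivWithin_le
      (f := u) (C := M/ρ) (s := ball q.2 ρ)
      (f' := fun ζ => ContinuousLinearMap.smulRight (1 : ℂ →L[ℂ] ℂ) (deriv u ζ))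
      (fun ζ hζ => by
        have : DifferentiableAt ℂ u ζ :=
          hudiff.differentiableAt (isOpen_ball.mem_nhds (by
            rw [mem_ball] at hζ ⊢; linarith))
        exact (this.hasDerivAt.hasFDerivAt).hasFDerivWithinAt)
      (fun ζ hζ => by
        rw [ContinuousLinearMap.norm_smulRight_apply, norm_one, one_mul]
        exact hderiv ζ hζ)
      (convex_ball q.2 ρ) hw₂ hz₂
    simpa [u, norm_sub_rev] using hmvt
  have h1 := key z.2 hzw2 z.1 (mem_ball.mpr hzw1) w.1 (mem_ball.mpr hww1)
  have h2 := key2 w.1 hww1 z.2 (mem_ball.mpr hzw2) w.2 (mem_ball.mpr hww2)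
  have e1 : ‖z.1 - w.1‖ ≤ ‖z - w‖ := by
    have : z - w = (z.1 - w.1, z.2 - w.2) := rfl
    rw [this, Prod.norm_def]
    exact le_max_left _ _
  have e2 : ‖z.2 - w.2‖ ≤ ‖z - w‖ := by
    have : z - w = (z.1 - w.1, z.2 - w.2) := rfl
    rw [this, Prod.norm_def]
    exact le_max_right _ _
  have hM0 : 0 ≤ M := le_trans (norm_nonneg _) (hM q (mem_closedBall_self (by positivity)))
  have hMρ : 0 ≤ M / ρ := by positivity
  calc ‖A z - A w‖ = ‖(A (z.1, z.2) - A (w.1, z.2)) + (A (w.1, z.2) - A (w.1, w.2))‖ := by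
        congr 1; ring_nf
  _ ≤ ‖A (z.1, z.2) - A (w.1, z.2)‖ + ‖A (w.1, z.2) - A (w.1, w.2)‖ := norm_add_le _ _
  _ ≤ (M/ρ) * ‖z.1 - w.1‖ + (M/ρ) * ‖z.2 - w.2‖ := add_le_add h1 h2
  _ ≤ (M/ρ) * ‖z - w‖ + (M/ρ) * ‖z - w‖ := add_le_add (by nlinarith) (by nlinarith)
  _ = (2*M/ρ) * ‖z - w‖ := by ring


set_option maxHeartbeats 1000000 in
/-- For the holomorphic vector field `Z = xA ∂/∂x + yB ∂/∂y` on an open set `U`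
containing the closed polydisc `{|x| ≤ a, |y| ≤ b}`, with `Re A > 0 > Re B` on
`U`, the forward trajectory of the real flow through a point `(x₀,y₀)` with
`0 < |x₀| ≤ a`, `|y₀| ≤ b` meets the set `{|x| = a, |y| ≤ b}` at exactly one
point. -/
theorem stmt_8 (a b : ℝ) (ha : 0 < a) (hb : 0 < b)
    (U : Set (ℂ × ℂ)) (hU : IsOpen U)
    (hsub : {p : ℂ × ℂ | ‖p.1‖ ≤ a ∧ ‖p.2‖ ≤ b} ⊆ U)
    (A B : ℂ × ℂ → ℂ) (hA : DifferentiableOn ℂ A U) (hB : DifferentiableOn ℂ B U)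
    (hReA : ∀ p ∈ U, 0 < (A p).re) (hReB : ∀ p ∈ U, (B p).re < 0)
    (x₀ y₀ : ℂ) (hx₀ : x₀ ≠ 0) (hxa : ‖x₀‖ ≤ a) (hyb : ‖y₀‖ ≤ b) :
    ∃! q : ℂ × ℂ, ‖q.1‖ = a ∧ ‖q.2‖ ≤ b ∧
      ∃ T : ℝ, 0 ≤ T ∧ ∃ x y : ℝ → ℂ,
        x 0 = x₀ ∧ y 0 = y₀ ∧
        (∀ t ∈ Set.Icc 0 T, (x t, y t) ∈ U) ∧
        (∀ t ∈ Set.Icc 0 T,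
          HasDerivWithinAt x (x t * A (x t, y t)) (Set.Icc 0 T) t) ∧
        (∀ t ∈ Set.Icc 0 T,
          HasDerivWithinAt y (y t * B (x t, y t)) (Set.Icc 0 T) t) ∧
        (x T, y T) = q := by
  classical
  set Kc : Set (ℂ × ℂ) := {p : ℂ × ℂ | ‖p.1‖ ≤ a ∧ ‖p.2‖ ≤ b} with hKc
  have hKcl : IsClosed Kc := by
    have : Kc = {p : ℂ × ℂ | ‖p.1‖ ≤ a} ∩ {p : ℂ × ℂ | ‖p.2‖ ≤ b} := rfl
    rw [this]
    exact (isClosed_le (continuous_norm.comp continuous_fst) continuous_const).inter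
      (isClosed_le (continuous_norm.comp continuous_snd) continuous_const)
  have hKb : Kc ⊆ closedBall 0 (max a b) := by
    intro p hp
    rw [mem_closedBall, dist_zero_right, Prod.norm_def]
    exact max_le_max (by exact hp.1) (by exact hp.2)
  have hKcomp : IsCompact Kc := (isCompact_closedBall _ _).of_isClosed_subset hKcl hKb
  have hp₀ : (x₀, y₀) ∈ Kc := ⟨hxa, hyb⟩
  have hKne : Kc.Nonempty := ⟨_, hp₀⟩
  obtain ⟨δ, hδ0, hδU⟩ := hKcomp.exists_cthickening_subset_open hU hsub
  have hWU : ∀ p : ℂ × ℂ, infDist p Kc ≤ δ/2 → p ∈ U := by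
    intro p hp
    apply hδU
    obtain ⟨y, hyK, hyd⟩ := hKcomp.exists_infDist_eq_dist hKne p
    exact mem_cthickening_of_dist_le p y δ Kc hyK (by rw [← hyd]; linarith)
  set r : ℝ := δ/6 with hrdef
  have hr : 0 < r := by positivity
  set ρ : ℝ := r/2 with hρdef
  have hρ : 0 < ρ := by positivity
  set W : Set (ℂ × ℂ) := {p | infDist p Kc ≤ δ/2} with hWdef
  have hWsubU : W ⊆ U := fun p hp => hWU p hp
  have hKW : Kc ⊆ W := by
    intro p hp
    show infDist p Kc ≤ δ/2
    rw [infDist_zero_of_mem hp]; positivity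
  have hWcl : IsClosed W := isClosed_le (continuous_infDist_pt Kc) continuous_const
  have hWb : W ⊆ closedBall 0 (max a b + δ/2) := by
    intro p hp
    obtain ⟨y, hyK, hyd⟩ := hKcomp.exists_infDist_eq_dist hKne p
    rw [mem_closedBall, dist_zero_right]
    have h1 : dist p y ≤ δ/2 := by rw [← hyd]; exact hp
    have h2 : ‖y‖ ≤ max a b := by
      have := hKb hyK; rwa [mem_closedBall, dist_zero_right] at this
    calc ‖p‖ ≤ ‖y‖ + dist p y := by
          rw [dist_eq_norm]
          calc ‖p‖ = ‖y + (p - y)‖ := by ring_nf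
          _ ≤ ‖y‖ + ‖p - y‖ := norm_add_le _ _
    _ ≤ max a b + δ/2 := add_le_add h2 h1
  have hWcomp : IsCompact W := (isCompact_closedBall _ _).of_isClosed_subset hWcl hWb
  -- bounds on W
  obtain ⟨MA₁, hMA₁⟩ := hWcomp.exists_bound_of_continuousOn (hA.continuousOn.mono hWsubU)
  obtain ⟨MB₁, hMB₁⟩ := hWcomp.exists_bound_of_continuousOn (hB.continuousOn.mono hWsubU)
  obtain ⟨N₁, hN₁⟩ := hWcomp.exists_bound_of_continuousOn
    (continuousOn_id : ContinuousOn (fun p : ℂ × ℂ => p) W)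
  set MA : ℝ := max MA₁ 0 with hMAdef
  set MB : ℝ := max MB₁ 0 with hMBdef
  set N : ℝ := max N₁ 0 with hNdef
  have hMA : ∀ p ∈ W, ‖A p‖ ≤ MA := fun p hp => (hMA₁ p hp).trans (le_max_left _ _)
  have hMB : ∀ p ∈ W, ‖B p‖ ≤ MB := fun p hp => (hMB₁ p hp).trans (le_max_left _ _)
  have hN : ∀ p ∈ W, ‖p‖ ≤ N := fun p hp => (hN₁ p hp).trans (le_max_left _ _)
  have hMA0 : 0 ≤ MA := le_max_right _ _
  have hMB0 : 0 ≤ MB := le_max_right _ _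
  have hN0 : 0 ≤ N := le_max_right _ _
  set F : ℂ × ℂ → ℂ × ℂ := fun p => (p.1 * A p, p.2 * B p) with hFdef
  set MF : ℝ := N * max MA MB with hMFdef
  have hMF0 : 0 ≤ MF := mul_nonneg hN0 (le_trans hMA0 (le_max_left _ _))
  have hFbd : ∀ p ∈ W, ‖F p‖ ≤ MF := by
    intro p hp
    rw [Prod.norm_def]
    have h1 : ‖p.1‖ ≤ N := le_trans (norm_fst_le p) (hN p hp)
    have h2 : ‖p.2‖ ≤ N := le_trans (norm_snd_le p) (hN p hp)
    apply max_le
    · calc ‖p.1 * A p‖ = ‖p.1‖ * ‖A p‖ := norm_mul _ _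
      _ ≤ N * max MA MB := mul_le_mul h1 ((hMA p hp).trans (le_max_left _ _)) (norm_nonneg _) hN0
    · calc ‖p.2 * B p‖ = ‖p.2‖ * ‖B p‖ := norm_mul _ _
      _ ≤ N * max MA MB := mul_le_mul h2 ((hMB p hp).trans (le_max_right _ _)) (norm_nonneg _) hN0
  -- minimum of Re A on Kc
  obtain ⟨pm, hpmK, hpmmin⟩ := hKcomp.exists_isMinOn hKne
    (Complex.continuous_re.comp_continuousOn (hA.continuousOn.mono hsub))
  set ε₀ : ℝ := (A pm).re with hε₀def
  have hε₀ : 0 < ε₀ := hReA pm (hsub hpmK)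
  have hminA : ∀ p ∈ Kc, ε₀ ≤ (A p).re := fun p hp => isMinOn_iff.mp hpmmin p hp
  -- thickened sets
  set T : Set (ℂ × ℂ) := {p | infDist p Kc ≤ r} with hTdef
  have hTW : T ⊆ W := by
    intro p hp
    show infDist p Kc ≤ δ/2
    have : infDist p Kc ≤ r := hp
    rw [hrdef] at this; linarith
  have hKT : Kc ⊆ T := by
    intro p hp
    show infDist p Kc ≤ r
    rw [infDist_zero_of_mem hp]; positivity
  have hballW : ∀ q ∈ T, closedBall q (3*ρ) ⊆ W := by
    intro q hq p hp
    show infDist p Kc ≤ δ/2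
    calc infDist p Kc ≤ infDist q Kc + dist p q := infDist_le_infDist_add_dist
    _ ≤ r + 3*ρ := add_le_add hq (mem_closedBall.mp hp)
    _ ≤ δ/2 := by rw [hρdef, hrdef]; linarith
  have hballU : ∀ q ∈ T, closedBall q (3*ρ) ⊆ U := fun q hq => (hballW q hq).trans hWsubU
  have hballsub : ball (0 : ℂ × ℂ) 0 ⊆ W := by simp
  -- Lipschitz estimates on balls
  have hlipA : ∀ q ∈ T, ∀ z ∈ ball q ρ, ∀ w ∈ ball q ρ, ‖A z - A w‖ ≤ (2*MA/ρ)*‖z-w‖ :=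
    fun q hq z hz w hw => stmt8_slice_lip hU hA hρ q (hballU q hq)
      (fun p hp => hMA p (hballW q hq hp)) hz hw
  have hlipB : ∀ q ∈ T, ∀ z ∈ ball q ρ, ∀ w ∈ ball q ρ, ‖B z - B w‖ ≤ (2*MB/ρ)*‖z-w‖ :=
    fun q hq z hz w hw => stmt8_slice_lip hU hB hρ q (hballU q hq)
      (fun p hp => hMB p (hballW q hq hp)) hz hw
  set LF : ℝ := max (N * (2*MA/ρ) + MA) (N * (2*MB/ρ) + MB) with hLFdef
  have hLF0 : 0 ≤ LF := le_trans (by positivity) (le_max_left _ _)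
  have hballball : ∀ q : ℂ × ℂ, ball q ρ ⊆ closedBall q (3*ρ) :=
    fun q => ball_subset_closedBall.trans (closedBall_subset_closedBall (by linarith))
  have hlipF : ∀ q ∈ T, ∀ z ∈ ball q ρ, ∀ w ∈ ball q ρ, ‖F z - F w‖ ≤ LF * ‖z - w‖ := by
    intro q hq z hz w hw
    have hzW : z ∈ W := hballW q hq (hballball q hz)
    have hwW : w ∈ W := hballW q hq (hballball q hw)
    have hz1 : ‖z.1‖ ≤ N := le_trans (norm_fst_le z) (hN z hzW)
    have hz2 : ‖z.2‖ ≤ N := le_trans (norm_snd_le z) (hN z hzW)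
    have he1 : ‖z.1 - w.1‖ ≤ ‖z - w‖ := norm_fst_le (z - w)
    have he2 : ‖z.2 - w.2‖ ≤ ‖z - w‖ := norm_snd_le (z - w)
    rw [Prod.norm_def]
    apply max_le
    · have hrw : z.1 * A z - w.1 * A w = z.1 * (A z - A w) + (z.1 - w.1) * A w := by ring
      show ‖z.1 * A z - w.1 * A w‖ ≤ LF * ‖z - w‖
      rw [hrw]
      calc ‖z.1 * (A z - A w) + (z.1 - w.1) * A w‖
          ≤ ‖z.1‖ * ‖A z - A w‖ + ‖z.1 - w.1‖ * ‖A w‖ := by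
            refine le_trans (norm_add_le _ _) ?_
            rw [norm_mul, norm_mul]
      _ ≤ N * ((2*MA/ρ)*‖z-w‖) + ‖z - w‖ * MA := by
            apply add_le_add
            · exact mul_le_mul hz1 (hlipA q hq z hz w hw) (norm_nonneg _) hN0
            · exact mul_le_mul he1 (hMA w hwW) (norm_nonneg _) (norm_nonneg _)
      _ = (N * (2*MA/ρ) + MA) * ‖z - w‖ := by ring
      _ ≤ LF * ‖z - w‖ := mul_le_mul_of_nonneg_right (le_max_left _ _) (norm_nonneg _)
    · have hrw : z.2 * B z - w.2 * B w = z.2 * (B z - B w) + (z.2 - w.2) * B w := by ring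
      show ‖z.2 * B z - w.2 * B w‖ ≤ LF * ‖z - w‖
      rw [hrw]
      calc ‖z.2 * (B z - B w) + (z.2 - w.2) * B w‖
          ≤ ‖z.2‖ * ‖B z - B w‖ + ‖z.2 - w.2‖ * ‖B w‖ := by
            refine le_trans (norm_add_le _ _) ?_
            rw [norm_mul, norm_mul]
      _ ≤ N * ((2*MB/ρ)*‖z-w‖) + ‖z - w‖ * MB := by
            apply add_le_add
            · exact mul_le_mul hz2 (hlipB q hq z hz w hw) (norm_nonneg _) hN0
            · exact mul_le_mul he2 (hMB w hwW) (norm_nonneg _) (norm_nonneg _)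
      _ = (N * (2*MB/ρ) + MB) * ‖z - w‖ := by ring
      _ ≤ LF * ‖z - w‖ := mul_le_mul_of_nonneg_right (le_max_right _ _) (norm_nonneg _)
  set LT : ℝ := max LF (2*MF/ρ) with hLTdef
  have hLT0 : 0 ≤ LT := le_trans hLF0 (le_max_left _ _)
  have hFT : ∀ z ∈ T, ∀ w ∈ T, ‖F z - F w‖ ≤ LT * ‖z - w‖ := by
    intro z hz w hw
    rcases lt_or_ge (dist z w) ρ with h | h
    · exact le_trans (hlipF z hz z (mem_ball_self hρ) w (by rwa [mem_ball, dist_comm]))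
        (mul_le_mul_of_nonneg_right (le_max_left _ _) (norm_nonneg _))
    · have h1 : ‖F z - F w‖ ≤ 2*MF := by
        calc ‖F z - F w‖ ≤ ‖F z‖ + ‖F w‖ := norm_sub_le _ _
        _ ≤ MF + MF := add_le_add (hFbd z (hTW hz)) (hFbd w (hTW hw))
        _ = 2*MF := by ring
      calc ‖F z - F w‖ ≤ 2*MF := h1
      _ = (2*MF/ρ)*ρ := by field_simp
      _ ≤ (2*MF/ρ)*‖z - w‖ := mul_le_mul_of_nonneg_left (by rwa [← dist_eq_norm]) (by positivity)
      _ ≤ LT*‖z-w‖ := mul_le_mul_of_nonneg_right (le_max_right _ _) (norm_nonneg _)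
  -- bump function
  set χ : ℂ × ℂ → ℝ := fun p => max (1 - infDist p Kc / r) 0 with hχdef
  have hχ0 : ∀ p, 0 ≤ χ p := fun p => le_max_right _ _
  have hχ1 : ∀ p, χ p ≤ 1 := by
    intro p
    apply max_le _ (by norm_num)
    have h1 : (0:ℝ) ≤ infDist p Kc := infDist_nonneg
    have h2 : 0 ≤ infDist p Kc / r := by positivity
    linarith
  have hχK : ∀ p ∈ Kc, χ p = 1 := by
    intro p hp
    rw [hχdef]
    simp [infDist_zero_of_mem hp]
  have hχT : ∀ p, χ p ≠ 0 → p ∈ T := by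
    intro p hp
    have h1 : 0 < 1 - infDist p Kc / r := by
      by_contra h
      push_neg at h
      exact hp (max_eq_right h)
    show infDist p Kc ≤ r
    have h2 : infDist p Kc / r < 1 := by linarith
    have h3 := (div_lt_one hr).mp h2
    linarith
  have hχU : ∀ p, χ p ≠ 0 → p ∈ U := fun p hp => hWsubU (hTW (hχT p hp))
  have hinfLip : ∀ p q : ℂ × ℂ, |infDist p Kc - infDist q Kc| ≤ dist p q := by
    intro p q
    rw [abs_sub_le_iff]
    constructor
    · have := infDist_le_infDist_add_dist (x := p) (y := q) (s := Kc)
      linarith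
    · have := infDist_le_infDist_add_dist (x := q) (y := p) (s := Kc)
      rw [dist_comm] at this
      linarith
  have hχlip : ∀ p q, |χ p - χ q| ≤ dist p q / r := by
    intro p q
    calc |χ p - χ q| ≤ |(1 - infDist p Kc / r) - (1 - infDist q Kc / r)| :=
          abs_max_sub_max_le_abs _ _ _
    _ = |infDist q Kc - infDist p Kc| / r := by
          rw [show (1 - infDist p Kc / r) - (1 - infDist q Kc / r)
              = (infDist q Kc - infDist p Kc) / r by ring]
          rw [abs_div, abs_of_pos hr]
    _ ≤ dist p q / r := by
          gcongr
          rw [abs_sub_comm]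
          exact hinfLip p q
  set G : ℂ × ℂ → ℂ × ℂ := fun p => χ p • F p with hGdef
  have hGK : ∀ p ∈ Kc, G p = F p := by
    intro p hp
    rw [hGdef]
    simp [hχK p hp]
  have hGbd : ∀ p, ‖G p‖ ≤ MF := by
    intro p
    by_cases h : χ p = 0
    · rw [hGdef]; simp [h, hMF0]
    · rw [hGdef]
      show ‖χ p • F p‖ ≤ MF
      rw [norm_smul, Real.norm_eq_abs, _root_.abs_of_nonneg (hχ0 p)]
      calc χ p * ‖F p‖ ≤ 1 * MF :=
        mul_le_mul (hχ1 p) (hFbd p (hTW (hχT p h))) (norm_nonneg _) (by norm_num)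
      _ = MF := one_mul _
  set LG : ℝ := LT + MF/r with hLGdef
  have hLG0 : 0 ≤ LG := by positivity
  have hG0 : ∀ p q, χ q = 0 → ‖G p - G q‖ ≤ (MF/r) * dist p q := by
    intro p q hq
    rw [hGdef]
    show ‖χ p • F p - χ q • F q‖ ≤ (MF/r) * dist p q
    rw [hq, zero_smul, sub_zero]
    by_cases hp : χ p = 0
    · rw [hp, zero_smul, norm_zero]; positivity
    · have hpT := hχT p hp
      rw [norm_smul, Real.norm_eq_abs, _root_.abs_of_nonneg (hχ0 p)]
      have h1 : ‖F p‖ ≤ MF := hFbd p (hTW hpT)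
      have hq' : r ≤ infDist q Kc := by
        by_contra h
        push_neg at h
        have h2 : 0 < 1 - infDist q Kc / r := by
          rw [sub_pos, div_lt_one hr]; exact h
        have h3 : χ q = 1 - infDist q Kc / r := max_eq_left h2.le
        rw [hq] at h3
        linarith
      have h2 : χ p ≤ dist p q / r := by
        have h3 : infDist q Kc ≤ infDist p Kc + dist q p := infDist_le_infDist_add_dist
        have h4 : χ p = 1 - infDist p Kc / r := by
          have h5 : 0 < 1 - infDist p Kc / r := by
            by_contra h
            push_neg at h
            exact hp (max_eq_right h)
          exact max_eq_left h5.le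
        rw [h4, dist_comm p q]
        have h6 : r - infDist p Kc ≤ dist q p := by linarith
        calc 1 - infDist p Kc / r = (r - infDist p Kc)/r := by field_simp
        _ ≤ dist q p / r := by gcongr
      calc χ p * ‖F p‖ ≤ (dist p q / r) * MF := mul_le_mul h2 h1 (norm_nonneg _) (by positivity)
      _ = (MF/r) * dist p q := by ring
  have hGlip : LipschitzWith (Real.toNNReal LG) G := by
    apply LipschitzWith.of_dist_le_mul
    intro p q
    have hcoe : ((Real.toNNReal LG : NNReal) : ℝ) = max LG 0 := Real.coe_toNNReal' LG
    rw [dist_eq_norm, hcoe]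
    have main : ‖G p - G q‖ ≤ LG * dist p q := by
      by_cases hq : χ q = 0
      · refine le_trans (hG0 p q hq) ?_
        apply mul_le_mul_of_nonneg_right _ dist_nonneg
        rw [hLGdef]; linarith
      by_cases hp : χ p = 0
      · rw [norm_sub_rev]
        refine le_trans (hG0 q p hp) ?_
        rw [dist_comm q p]
        apply mul_le_mul_of_nonneg_right _ dist_nonneg
        rw [hLGdef]; linarith
      · have hpT := hχT p hp
        have hqT := hχT q hq
        have hsplit : G p - G q = χ p • (F p - F q) + (χ p - χ q) • F q := by
          rw [hGdef]
          show χ p • F p - χ q • F q = χ p • (F p - F q) + (χ p - χ q) • F q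
          rw [smul_sub, sub_smul]
          abel
        rw [hsplit]
        calc ‖χ p • (F p - F q) + (χ p - χ q) • F q‖
            ≤ ‖χ p • (F p - F q)‖ + ‖(χ p - χ q) • F q‖ := norm_add_le _ _
        _ = |χ p| * ‖F p - F q‖ + |χ p - χ q| * ‖F q‖ := by
            rw [norm_smul, norm_smul, Real.norm_eq_abs, Real.norm_eq_abs]
        _ ≤ 1 * (LT * ‖p - q‖) + (dist p q / r) * MF := by
            apply add_le_add
            · apply mul_le_mul _ (hFT p hpT q hqT) (norm_nonneg _) (by norm_num)
              rw [_root_.abs_of_nonneg (hχ0 p)]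
              exact hχ1 p
            · exact mul_le_mul (hχlip p q) (hFbd q (hTW hqT)) (norm_nonneg _)
                (by positivity)
        _ = LG * dist p q := by
            rw [← dist_eq_norm, hLGdef]
            ring
    exact main.trans (mul_le_mul_of_nonneg_right (le_max_left _ _) dist_nonneg)
  -- Picard–Lindelöf global solution
  set nx₀ : ℝ := Complex.normSq x₀ with hnx₀def
  have hnx₀pos : 0 < nx₀ := Complex.normSq_pos.mpr hx₀
  have hnx₀a : nx₀ ≤ a^2 := stmt8_normSq_le hxa
  set Tmax : ℝ := (a^2 - nx₀)/(2*ε₀*nx₀) + 1 with hTmaxdef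
  have hTmaxpos : 0 < Tmax := by
    have h1 : 0 ≤ (a^2 - nx₀)/(2*ε₀*nx₀) := div_nonneg (by linarith) (by positivity)
    rw [hTmaxdef]
    linarith
  have hMF1 : (0:ℝ) ≤ MF + 1 := by linarith
  have hMFT : (0:ℝ) ≤ (MF+1)*Tmax := mul_nonneg hMF1 hTmaxpos.le
  have hpl : IsPicardLindelof (fun _ : ℝ => G) (tmin := 0) (tmax := Tmax)
      ⟨0, left_mem_Icc.mpr hTmaxpos.le⟩ (x₀, y₀) (Real.toNNReal ((MF+1)*Tmax)) 0
      (Real.toNNReal (MF+1)) (Real.toNNReal LG) :=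
    { lipschitzOnWith := fun t _ => hGlip.lipschitzOnWith
      continuousOn := fun x _ => continuousOn_const
      norm_le := fun t _ x _ => (hGbd x).trans (by rw [Real.coe_toNNReal _ hMF1]; linarith)
      mul_max_le := by
        show ((Real.toNNReal (MF+1) : NNReal) : ℝ) * max (Tmax - 0) (0 - 0)
          ≤ ((Real.toNNReal ((MF+1)*Tmax) : NNReal) : ℝ) - 0
        rw [Real.coe_toNNReal _ hMF1, Real.coe_toNNReal _ hMFT, sub_self, sub_zero, sub_zero,
          max_eq_left hTmaxpos.le] }
  obtain ⟨X, hX0', hX⟩ := hpl.exists_eq_forall_mem_Icc_hasDerivWithinAt₀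
  have hX0 : X 0 = (x₀, y₀) := hX0'
  set xf : ℝ → ℂ := fun t => (X t).1 with hxfdef
  set yf : ℝ → ℂ := fun t => (X t).2 with hyfdef
  have hxf0 : xf 0 = x₀ := by rw [hxfdef]; show (X 0).1 = x₀; rw [hX0]
  have hyf0 : yf 0 = y₀ := by rw [hyfdef]; show (X 0).2 = y₀; rw [hX0]
  have hdx : ∀ t ∈ Icc (0:ℝ) Tmax,
      HasDerivWithinAt xf (χ (X t) • (xf t * A (X t))) (Icc 0 Tmax) t := by
    intro t ht
    exact (ContinuousLinearMap.fst ℝ ℂ ℂ).hasFDerivAt.comp_hasDerivWithinAt t (hX t ht)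
  have hdy : ∀ t ∈ Icc (0:ℝ) Tmax,
      HasDerivWithinAt yf (χ (X t) • (yf t * B (X t))) (Icc 0 Tmax) t := by
    intro t ht
    exact (ContinuousLinearMap.snd ℝ ℂ ℂ).hasFDerivAt.comp_hasDerivWithinAt t (hX t ht)
  set nx : ℝ → ℝ := fun t => Complex.normSq (xf t) with hnxdef
  set ny : ℝ → ℝ := fun t => Complex.normSq (yf t) with hnydef
  have hnxd : ∀ t ∈ Icc (0:ℝ) Tmax, HasDerivWithinAt nx
      (2 * (χ (X t) * (Complex.normSq (xf t) * (A (X t)).re))) (Icc 0 Tmax) t := by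
    intro t ht
    have h1 := stmt8_normSq_deriv (hdx t ht)
    rw [stmt8_re_smul] at h1
    exact h1
  have hnyd : ∀ t ∈ Icc (0:ℝ) Tmax, HasDerivWithinAt ny
      (2 * (χ (X t) * (Complex.normSq (yf t) * (B (X t)).re))) (Icc 0 Tmax) t := by
    intro t ht
    have h1 := stmt8_normSq_deriv (hdy t ht)
    rw [stmt8_re_smul] at h1
    exact h1
  have hnx0 : nx 0 = nx₀ := by rw [hnxdef]; show Complex.normSq (xf 0) = nx₀; rw [hxf0]
  have hny0 : ny 0 = Complex.normSq y₀ := by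
    rw [hnydef]; show Complex.normSq (yf 0) = _; rw [hyf0]
  have hχsignA : ∀ p : ℂ × ℂ, 0 ≤ χ p * (Complex.normSq p.1 * (A p).re) := by
    intro p
    by_cases h : χ p = 0
    · rw [h]; simp
    · exact mul_nonneg (hχ0 p) (mul_nonneg (Complex.normSq_nonneg _) (hReA p (hχU p h)).le)
  have hχsignB : ∀ p : ℂ × ℂ, χ p * (Complex.normSq p.2 * (B p).re) ≤ 0 := by
    intro p
    by_cases h : χ p = 0
    · rw [h]; simp
    · exact mul_nonpos_of_nonneg_of_nonpos (hχ0 p)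
        (mul_nonpos_of_nonneg_of_nonpos (Complex.normSq_nonneg _) (hReB p (hχU p h)).le)
  have hnxmono : MonotoneOn nx (Icc 0 Tmax) :=
    stmt8_mono hnxd (fun t _ => by
      have := hχsignA (X t)
      nlinarith)
  have hnyanti : AntitoneOn ny (Icc 0 Tmax) :=
    stmt8_anti hnyd (fun t _ => by
      have := hχsignB (X t)
      nlinarith)
  have hbb : ∀ t ∈ Icc (0:ℝ) Tmax, ny t ≤ b^2 := by
    intro t ht
    have h1 : ny t ≤ ny 0 := hnyanti (left_mem_Icc.mpr hTmaxpos.le) ht ht.1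
    rw [hny0] at h1
    exact h1.trans (stmt8_normSq_le hyb)
  have hlow : ∀ t ∈ Icc (0:ℝ) Tmax, nx₀ ≤ nx t := by
    intro t ht
    have h1 : nx 0 ≤ nx t := hnxmono (left_mem_Icc.mpr hTmaxpos.le) ht ht.1
    rw [hnx0] at h1
    exact h1
  have hmemK : ∀ t ∈ Icc (0:ℝ) Tmax, nx t ≤ a^2 → X t ∈ Kc := by
    intro t ht h
    exact ⟨stmt8_abs_le ha.le h, stmt8_abs_le hb.le (hbb t ht)⟩
  -- first exit time
  set D : Set ℝ := {t | t ∈ Icc (0:ℝ) Tmax ∧ nx t ≤ a^2} with hDdef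
  have hD0 : (0:ℝ) ∈ D := ⟨left_mem_Icc.mpr hTmaxpos.le, by rw [hnx0]; exact hnx₀a⟩
  have hDne : D.Nonempty := ⟨0, hD0⟩
  have hDbdd : BddAbove D := ⟨Tmax, fun t ht => ht.1.2⟩
  set t₁ : ℝ := sSup D with ht₁def
  have ht₁mem : t₁ ∈ Icc (0:ℝ) Tmax := ⟨le_csSup hDbdd hD0, csSup_le hDne (fun t ht => ht.1.2)⟩
  have hnxcont : ContinuousOn nx (Icc 0 Tmax) := fun t ht => (hnxd t ht).continuousWithinAt
  have ht₁D : nx t₁ ≤ a^2 := by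
    by_contra h
    push_neg at h
    have hc := hnxcont t₁ ht₁mem
    obtain ⟨η, hη0, hη⟩ := Metric.continuousWithinAt_iff.mp hc _ (sub_pos.mpr h)
    obtain ⟨d, hdD, hdgt⟩ := exists_lt_of_lt_csSup hDne (by linarith : t₁ - η < sSup D)
    have hd1 : d ≤ t₁ := le_csSup hDbdd hdD
    have hd2 : dist d t₁ < η := by
      rw [Real.dist_eq, _root_.abs_of_nonpos (by linarith)]
      linarith
    have := hη hdD.1 hd2
    rw [Real.dist_eq] at this
    have h5 := (abs_lt.mp this).1
    have := hdD.2
    linarith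
  have hIccsub : Icc (0:ℝ) t₁ ⊆ Icc 0 Tmax := Icc_subset_Icc (le_refl 0) ht₁mem.2
  have ht₁K : ∀ t ∈ Icc (0:ℝ) t₁, X t ∈ Kc := by
    intro t ht
    have htI : t ∈ Icc (0:ℝ) Tmax := hIccsub ht
    apply hmemK t htI
    calc nx t ≤ nx t₁ := hnxmono htI ht₁mem ht.2
    _ ≤ a^2 := ht₁D
  have hgrow : nx₀ + 2*ε₀*nx₀*t₁ ≤ nx t₁ := by
    set hfun : ℝ → ℝ := fun t => nx t - 2*ε₀*nx₀*t with hfundef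
    have hh : ∀ t ∈ Icc (0:ℝ) t₁, HasDerivWithinAt hfun
        (2 * (χ (X t) * (Complex.normSq (xf t) * (A (X t)).re)) - 2*ε₀*nx₀) (Icc 0 t₁) t := by
      intro t ht
      have lin : HasDerivWithinAt (fun τ : ℝ => 2*ε₀*nx₀*τ) (2*ε₀*nx₀) (Icc 0 t₁) t := by
        simpa using (hasDerivWithinAt_id t (Icc (0:ℝ) t₁)).const_mul (2*ε₀*nx₀)
      exact ((hnxd t (hIccsub ht)).mono hIccsub).sub lin
    have hmono := stmt8_mono hh (fun t ht => by
      have h1 := hlow t (hIccsub ht)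
      have h2 := hminA (X t) (ht₁K t ht)
      have h3 := hχK (X t) (ht₁K t ht)
      rw [h3]
      have h4 : Complex.normSq (xf t) = nx t := rfl
      nlinarith)
    have h5 := hmono (left_mem_Icc.mpr ht₁mem.1) (right_mem_Icc.mpr ht₁mem.1) ht₁mem.1
    have h6 : hfun 0 = nx₀ := by
      show nx 0 - 2*ε₀*nx₀*0 = nx₀
      rw [hnx0]; ring
    have h7 : hfun t₁ = nx t₁ - 2*ε₀*nx₀*t₁ := rfl
    rw [h6, h7] at h5
    linarith
  have ht₁lt : t₁ < Tmax := by
    have h1 : 2*ε₀*nx₀*t₁ ≤ a^2 - nx₀ := by linarith [ht₁D, hgrow]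
    have h2 : t₁ ≤ (a^2 - nx₀)/(2*ε₀*nx₀) := by
      rw [le_div_iff₀ (by positivity)]
      linarith
    rw [hTmaxdef]
    linarith
  have ht₁a : nx t₁ = a^2 := by
    by_contra h
    have hlt : nx t₁ < a^2 := lt_of_le_of_ne ht₁D h
    have hc := hnxcont t₁ ht₁mem
    obtain ⟨η, hη0, hη⟩ := Metric.continuousWithinAt_iff.mp hc _ (sub_pos.mpr hlt)
    set t₂ : ℝ := min (t₁ + η/2) Tmax with ht₂def
    have ht₂I : t₂ ∈ Icc (0:ℝ) Tmax := ⟨le_min (by linarith [ht₁mem.1]) hTmaxpos.le, min_le_right _ _⟩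
    have ht₂gt : t₁ < t₂ := lt_min (by linarith) ht₁lt
    have ht₂close : dist t₂ t₁ < η := by
      rw [Real.dist_eq, _root_.abs_of_nonneg (by linarith)]
      have := min_le_left (t₁ + η/2) Tmax
      linarith
    have h3 := hη ht₂I ht₂close
    rw [Real.dist_eq] at h3
    have h4 := (abs_lt.mp h3).2
    have ht₂D : t₂ ∈ D := ⟨ht₂I, by linarith⟩
    have := le_csSup hDbdd ht₂D
    linarith
  -- the exit point
  set q : ℂ × ℂ := X t₁ with hqdef
  have hq1 : ‖q.1‖ = a := stmt8_abs_eq ha.le ht₁a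
  have hq2 : ‖q.2‖ ≤ b := stmt8_abs_le hb.le (hbb t₁ ht₁mem)
  -- existence data
  have hUmem : ∀ t ∈ Icc (0:ℝ) t₁, (xf t, yf t) ∈ U := by
    intro t ht
    have h3 : (xf t, yf t) = X t := rfl
    rw [h3]
    exact hsub (ht₁K t ht)
  have hXdx : ∀ t ∈ Icc (0:ℝ) t₁,
      HasDerivWithinAt xf (xf t * A (xf t, yf t)) (Icc 0 t₁) t := by
    intro t ht
    have h1 := (hdx t (hIccsub ht)).mono hIccsub
    have h2 : χ (X t) = 1 := hχK (X t) (ht₁K t ht)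
    rw [h2, one_smul] at h1
    have h3 : (xf t, yf t) = X t := rfl
    rw [h3]
    exact h1
  have hXdy : ∀ t ∈ Icc (0:ℝ) t₁,
      HasDerivWithinAt yf (yf t * B (xf t, yf t)) (Icc 0 t₁) t := by
    intro t ht
    have h1 := (hdy t (hIccsub ht)).mono hIccsub
    have h2 : χ (X t) = 1 := hχK (X t) (ht₁K t ht)
    rw [h2, one_smul] at h1
    have h3 : (xf t, yf t) = X t := rfl
    rw [h3]
    exact h1
  -- strict monotonicity of nx on [0, t₁]
  have hnxstrict : StrictMonoOn nx (Icc 0 t₁) := by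
    apply stmt8_strictMono (fun t ht => (hnxd t (hIccsub ht)).mono hIccsub)
    intro t ht
    have h2 := hminA (X t) (ht₁K t ht)
    have h3 := hχK (X t) (ht₁K t ht)
    have h4 := hlow t (hIccsub ht)
    rw [h3]
    have h5 : Complex.normSq (xf t) = nx t := rfl
    nlinarith
  -- uniqueness
  have huniq : ∀ q' : ℂ × ℂ, (‖q'.1‖ = a ∧ ‖q'.2‖ ≤ b ∧
      ∃ T : ℝ, 0 ≤ T ∧ ∃ x y : ℝ → ℂ, x 0 = x₀ ∧ y 0 = y₀ ∧
        (∀ t ∈ Icc 0 T, (x t, y t) ∈ U) ∧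
        (∀ t ∈ Icc 0 T, HasDerivWithinAt x (x t * A (x t, y t)) (Icc 0 T) t) ∧
        (∀ t ∈ Icc 0 T, HasDerivWithinAt y (y t * B (x t, y t)) (Icc 0 T) t) ∧
        (x T, y T) = q') → q' = q := by
    rintro q' ⟨hq'1, hq'2, T', hT'0, x', y', hx'0, hy'0, hmem', hdx', hdy', hq'e⟩
    set Z : ℝ → ℂ × ℂ := fun t => (x' t, y' t) with hZdef
    set nx' : ℝ → ℝ := fun t => Complex.normSq (x' t) with hnx'def
    set ny' : ℝ → ℝ := fun t => Complex.normSq (y' t) with hny'def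
    have hnx'd : ∀ t ∈ Icc (0:ℝ) T', HasDerivWithinAt nx'
        (2 * (Complex.normSq (x' t) * (A (Z t)).re)) (Icc 0 T') t := by
      intro t ht
      have h1 := stmt8_normSq_deriv (hdx' t ht)
      rw [stmt8_re_mul] at h1
      exact h1
    have hny'd : ∀ t ∈ Icc (0:ℝ) T', HasDerivWithinAt ny'
        (2 * (Complex.normSq (y' t) * (B (Z t)).re)) (Icc 0 T') t := by
      intro t ht
      have h1 := stmt8_normSq_deriv (hdy' t ht)
      rw [stmt8_re_mul] at h1
      exact h1
    have hnx'mono : MonotoneOn nx' (Icc 0 T') :=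
      stmt8_mono hnx'd (fun t ht => by
        have h1 := (hReA (Z t) (hmem' t ht)).le
        have h2 := Complex.normSq_nonneg (x' t)
        nlinarith)
    have hny'anti : AntitoneOn ny' (Icc 0 T') :=
      stmt8_anti hny'd (fun t ht => by
        have h1 := (hReB (Z t) (hmem' t ht)).le
        have h2 := Complex.normSq_nonneg (y' t)
        nlinarith)
    have hx'T : x' T' = q'.1 := congrArg Prod.fst hq'e
    have hnx'T : nx' T' = a^2 := by
      show Complex.normSq (x' T') = a^2
      rw [hx'T, ← Complex.sq_norm, hq'1]
    have hnx'0 : nx' 0 = nx₀ := by show Complex.normSq (x' 0) = nx₀; rw [hx'0]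
    have hny'0 : ny' 0 = Complex.normSq y₀ := by
      show Complex.normSq (y' 0) = _
      rw [hy'0]
    have hny'b : ∀ t ∈ Icc (0:ℝ) T', ny' t ≤ b^2 := by
      intro t ht
      have h1 : ny' t ≤ ny' 0 := hny'anti (left_mem_Icc.mpr hT'0) ht ht.1
      rw [hny'0] at h1
      exact h1.trans (stmt8_normSq_le hyb)
    have hnx'low : ∀ t ∈ Icc (0:ℝ) T', nx₀ ≤ nx' t := by
      intro t ht
      have h1 : nx' 0 ≤ nx' t := hnx'mono (left_mem_Icc.mpr hT'0) ht ht.1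
      rwa [hnx'0] at h1
    have hZK : ∀ t ∈ Icc (0:ℝ) T', Z t ∈ Kc := by
      intro t ht
      constructor
      · apply stmt8_abs_le ha.le
        show nx' t ≤ a^2
        rw [← hnx'T]
        exact hnx'mono ht (right_mem_Icc.mpr hT'0) ht.2
      · exact stmt8_abs_le hb.le (hny'b t ht)
    have hZd : ∀ t ∈ Icc (0:ℝ) T', HasDerivWithinAt Z (G (Z t)) (Icc 0 T') t := by
      intro t ht
      have h1 := (hdx' t ht).prodMk (hdy' t ht)
      have h2 : G (Z t) = (x' t * A (Z t), y' t * B (Z t)) := by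
        rw [hGK (Z t) (hZK t ht)]
      rw [h2]
      exact h1
    set m : ℝ := min T' t₁ with hmdef
    have hm0 : 0 ≤ m := le_min hT'0 ht₁mem.1
    have hmT' : m ≤ T' := min_le_left _ _
    have hmt₁ : m ≤ t₁ := min_le_right _ _
    have hsubT' : Icc (0:ℝ) m ⊆ Icc 0 T' := Icc_subset_Icc (le_refl 0) hmT'
    have hsubTm : Icc (0:ℝ) m ⊆ Icc 0 Tmax :=
      Icc_subset_Icc (le_refl 0) ((hmt₁.trans ht₁mem.2))
    have heq : EqOn Z X (Icc 0 m) := by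
      apply ODE_solution_unique_of_mem_Icc_right
        (v := fun _ : ℝ => G) (s := fun _ => (univ : Set (ℂ × ℂ)))
        (K := Real.toNNReal LG) (fun t _ => hGlip.lipschitzOnWith)
        ?_ ?_ (fun t _ => mem_univ _) ?_ ?_ (fun t _ => mem_univ _) ?_
      · intro t ht
        exact ((hZd t (hsubT' ht)).continuousWithinAt).mono hsubT'
      · intro t ht
        have h1 : t ∈ Icc (0:ℝ) T' := ⟨ht.1, ht.2.le.trans hmT'⟩
        exact (hZd t h1).mono_of_mem_nhdsWithin
          (Icc_mem_nhdsGE_of_mem ⟨ht.1, lt_of_lt_of_le ht.2 hmT'⟩)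
      · intro t ht
        exact ((hX t (hsubTm ht)).continuousWithinAt).mono hsubTm
      · intro t ht
        have h1 : t ∈ Icc (0:ℝ) Tmax := ⟨ht.1, ht.2.le.trans (hmt₁.trans ht₁mem.2)⟩
        exact (hX t h1).mono_of_mem_nhdsWithin
          (Icc_mem_nhdsGE_of_mem ⟨ht.1, lt_of_lt_of_le ht.2 (hmt₁.trans ht₁mem.2)⟩)
      · show Z 0 = X 0
        rw [hX0]
        show (x' 0, y' 0) = (x₀, y₀)
        rw [hx'0, hy'0]
    have hnx'strict : StrictMonoOn nx' (Icc 0 T') := by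
      apply stmt8_strictMono hnx'd
      intro t ht
      have h2 := hminA (Z t) (hZK t ht)
      have h4 := hnx'low t ht
      have h5 : 0 < Complex.normSq (x' t) := by
        have h6 : nx₀ ≤ Complex.normSq (x' t) := h4
        linarith
      have h6 : 0 < (A (Z t)).re := lt_of_lt_of_le hε₀ h2
      positivity
    have hTt : T' = t₁ := by
      rcases le_or_gt T' t₁ with hle | hlt
      · have hmeq : m = T' := min_eq_left hle
        have h1 : Z T' = X T' := heq (by rw [hmeq]; exact right_mem_Icc.mpr hT'0)
        have h2 : nx T' = a^2 := by
          have h3 : nx' T' = nx T' := congrArg (fun p : ℂ × ℂ => Complex.normSq p.1) h1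
          rw [← h3]
          exact hnx'T
        by_contra hne
        have hTlt : T' < t₁ := lt_of_le_of_ne hle hne
        have h4 := hnxstrict ⟨hT'0, hle⟩ (right_mem_Icc.mpr ht₁mem.1) hTlt
        rw [h2, ht₁a] at h4
        exact lt_irrefl _ h4
      · exfalso
        have hmeq : m = t₁ := min_eq_right hlt.le
        have h1 : Z t₁ = X t₁ := heq (by rw [hmeq]; exact right_mem_Icc.mpr ht₁mem.1)
        have h2 : nx' t₁ = a^2 := by
          have h3 : nx' t₁ = nx t₁ := congrArg (fun p : ℂ × ℂ => Complex.normSq p.1) h1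
          rw [h3, ht₁a]
        have h4 := hnx'strict ⟨ht₁mem.1, hlt.le⟩ (right_mem_Icc.mpr hT'0) hlt
        rw [h2, hnx'T] at h4
        exact lt_irrefl _ h4
    have hmeq : m = t₁ := by rw [hmdef, hTt, min_self]
    have h1 : Z t₁ = X t₁ := heq (by rw [hmeq]; exact right_mem_Icc.mpr ht₁mem.1)
    rw [← hq'e, hTt]
    exact h1
  exact ⟨q, ⟨hq1, hq2, t₁, ht₁mem.1, xf, yf, hxf0, hyf0, hUmem, hXdx, hXdy, rfl⟩, huniq⟩
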